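/- arXiv:2405.16904 — 2 statements merged into one kernel-verified Lean document; each statement's English description precedes it below -/
import Mathlib

section
/- Let s be a nonzero even integer and t an integer with gcd(t, s) = 1. Then there exist a natural number k with 1 ≤ k ≤ |s|, even integers a_1, …, a_k, and rational numbers q_1, …, q_k such that q_k = a_k, for every index 1 ≤ i < k one has q_{i+1} ≠ 0 and q_i = a_i − 1/q_{i+1}, and q_1 = t/s. -/
lemma key_aux : ∀ n : ℕ, ∀ u v : ℤ, v ≠ 0 → v.natAbs ≤ n → Int.gcd u v = 1 →
    (Even u ↔ ¬ Even v) →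
    ∃ (k : ℕ) (a : ℕ → ℤ) (q : ℕ → ℚ),
      1 ≤ k ∧ (k : ℤ) ≤ |v| ∧
      (∀ i, 1 ≤ i → i ≤ k → Even (a i)) ∧
      q k = (a k : ℚ) ∧
      (∀ i, 1 ≤ i → i < k → q (i + 1) ≠ 0 ∧ q i = (a i : ℚ) - 1 / q (i + 1)) ∧
      q 1 = (u : ℚ) / (v : ℚ) := by
  intro n
  induction n with
  | zero =>
      intro u v hv hvn
      exact absurd hvn (by have := Int.natAbs_ne_zero.mpr hv; omega)
  | succ n ih =>
      intro u v hv hvn hg hp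
      set c : ℤ := round ((u : ℚ) / (2 * v)) with hc
      set r : ℤ := u - 2 * c * v with hr
      have hvQ : (v : ℚ) ≠ 0 := Int.cast_ne_zero.mpr hv
      have h2v : ((2 : ℚ) * v) ≠ 0 := by
        simp [hvQ]
      -- |r| ≤ |v|
      have habsQ : |(r : ℚ)| ≤ |(v : ℚ)| := by
        have h1 : |(u : ℚ) / (2 * v) - c| ≤ 1 / 2 := abs_sub_round _
        have h2 : ((u : ℚ) / (2 * v) - c) * (2 * v) = (r : ℚ) := by
          push_cast [hr]
          field_simp
        calc |(r : ℚ)| = |(u : ℚ) / (2 * v) - c| * |(2 : ℚ) * v| := by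
              rw [← h2, abs_mul]
          _ ≤ (1 / 2) * |(2 : ℚ) * v| := by
              exact mul_le_mul_of_nonneg_right h1 (abs_nonneg _)
          _ = |(v : ℚ)| := by
              rw [abs_mul, abs_two]
              ring
      have habs : |r| ≤ |v| := by exact_mod_cast habsQ
      -- parity : Even r ↔ Even u
      have hpr : Even r ↔ Even u := by
        constructor
        · intro h
          have : u = r + 2 * c * v := by omega
          rw [this]
          exact h.add ⟨c * v, by ring⟩
        · intro h
          have : r = u - 2 * c * v := hr
          rw [this]
          exact h.sub ⟨c * v, by ring⟩
      -- |r| ≠ |v| by parity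
      have hne : |r| ≠ |v| := by
        intro h
        have : r = v ∨ r = -v := abs_eq_abs.mp h
        rcases this with h' | h'
        · rcases hp.symm with _
          have : Even r ↔ Even v := by rw [h']
          tauto
        · have : Even r ↔ Even v := by rw [h', even_neg]
          tauto
      have habs' : |r| + 1 ≤ |v| := by omega
      by_cases hr0 : r = 0
      · -- terminal case: v ∣ u, so |v| = 1
        have h0 : u - 2 * c * v = 0 := by rw [← hr]; exact hr0
        have hvd : v ∣ u := ⟨2 * c, by linear_combination h0⟩
        have h1 : v.natAbs ∣ Int.gcd u v := Nat.dvd_gcd (Int.natAbs_dvd_natAbs.mpr hvd) dvd_rfl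
        have hv1 : v.natAbs = 1 := Nat.eq_one_of_dvd_one (hg ▸ h1)
        have hvo : ¬ Even v := by
          rcases Int.isUnit_iff.mp (Int.isUnit_iff_natAbs_eq.mpr hv1) with h | h <;>
            rw [h] <;> decide
        have hue : Even u := hp.mpr hvo
        refine ⟨1, fun _ => u * v, fun _ => (u : ℚ) * v, le_refl 1, ?_, ?_, ?_, ?_, ?_⟩
        · simpa using Int.one_le_abs (by omega : v ≠ 0)
        · intro i _ _
          exact hue.mul_right v
        · push_cast; ring
        · intro i h1 h2; omega
        · rcases Int.isUnit_iff.mp (Int.isUnit_iff_natAbs_eq.mpr hv1) with h | h <;>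
            · rw [h]; push_cast; field_simp
      · -- recursive case
        have hrQ : (r : ℚ) ≠ 0 := Int.cast_ne_zero.mpr hr0
        have hrn : r.natAbs ≤ n := by
          have h1 : (r.natAbs : ℤ) = |r| := (Int.abs_eq_natAbs r).symm
          have h2 : (v.natAbs : ℤ) = |v| := (Int.abs_eq_natAbs v).symm
          omega
        have hgr : Int.gcd (-v) r = 1 := by
          have hco' : IsCoprime v u := (Int.isCoprime_iff_gcd_eq_one.mpr hg).symm
          have h1 : IsCoprime v (u + v * (-(2 * c))) := hco'.add_mul_left_right _
          have h2 : r = u + v * (-(2 * c)) := by rw [hr]; ring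
          rw [← h2] at h1
          exact Int.isCoprime_iff_gcd_eq_one.mp h1.neg_left
        have hpnv : Even (-v) ↔ ¬ Even r := by
          constructor
          · intro h h2
            exact (hp.mp (hpr.mp h2)) (by simpa using h)
          · intro h
            simp only [even_neg]
            by_contra h2
            exact h (hpr.mpr (hp.mpr h2))
        obtain ⟨k', a', q', hk1, hk2, hev, hlast, hrec, hq1⟩ :=
          ih (-v) r hr0 hrn hgr hpnv
        refine ⟨k' + 1, fun i => if i ≤ 1 then 2 * c else a' (i - 1),
          fun i => if i ≤ 1 then (u : ℚ) / v else q' (i - 1), by omega, ?_, ?_, ?_, ?_, ?_⟩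
        · have : (k' : ℤ) ≤ |r| := hk2
          push_cast
          omega
        · intro i hi1 hi2
          by_cases h : i ≤ 1
          · simp only [if_pos h]
            exact ⟨c, by ring⟩
          · simp only [if_neg h]
            exact hev (i - 1) (by omega) (by omega)
        · have h : ¬ (k' + 1 ≤ 1) := by omega
          simp only [if_neg h, Nat.add_sub_cancel]
          exact hlast
        · intro i hi1 hi2
          by_cases h : i = 1
          · subst h
            have h2 : ¬ ((1 : ℕ) + 1 ≤ 1) := by omega
            simp only [if_neg h2, if_pos (le_refl 1)]
            have hq2 : q' (1 + 1 - 1) = ((-v : ℤ) : ℚ) / (r : ℚ) := by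
              simpa using hq1
            rw [hq2]
            constructor
            · push_cast
              exact div_ne_zero (by simpa using hvQ) hrQ
            · rw [one_div_div]
              have hu : (u : ℚ) = 2 * c * v + r := by push_cast [hr]; ring
              rw [hu, Int.cast_neg, div_neg, sub_neg_eq_add, add_div, mul_div_assoc,
                div_self hvQ, mul_one]
              push_cast
              ring
          · have h1 : ¬ (i ≤ 1) := by omega
            have h2 : ¬ (i + 1 ≤ 1) := by omega
            simp only [if_neg h1, if_neg h2]
            have := hrec (i - 1) (by omega) (by omega)
            have he : i - 1 + 1 = i + 1 - 1 := by omega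
            rw [he] at this
            exact this
        · simp

/-- Arithmetic core of Lemma 2.2: `t/s` (with `s` even, nonzero, coprime to `t`)
is a negative continued fraction with at most `|s|` even partial quotients. -/
theorem stmt_0 (s t : ℤ) (hs : s ≠ 0) (hse : Even s) (hco : Int.gcd t s = 1) :
    ∃ (k : ℕ) (a : ℕ → ℤ) (q : ℕ → ℚ),
      1 ≤ k ∧ (k : ℤ) ≤ |s| ∧
      (∀ i, 1 ≤ i → i ≤ k → Even (a i)) ∧
      q k = (a k : ℚ) ∧
      (∀ i, 1 ≤ i → i < k → q (i + 1) ≠ 0 ∧ q i = (a i : ℚ) - 1 / q (i + 1)) ∧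
      q 1 = (t : ℚ) / (s : ℚ) := by
  have hp : Even t ↔ ¬ Even s := by
    constructor
    · intro ht hs'
      have h2 : (2 : ℤ) ∣ t := ht.two_dvd
      have h3 : (2 : ℤ) ∣ s := hse.two_dvd
      have : (2 : ℤ) ∣ (Int.gcd t s : ℤ) := Int.dvd_coe_gcd h2 h3
      rw [hco] at this
      norm_num at this
    · intro h
      exact absurd hse h
  exact key_aux s.natAbs t s hs le_rfl hco hp
end

section
/- Let a and b be coprime integers of opposite parity (one even, one odd) with b ≠ 0. Then there exist an even integer m and an integer r such that a = m·b + r, |r| < |b|, r has the same parity as a, and gcd(r, b) = 1. -/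
/-- Auxiliary: shifting by a multiple of `b` preserves the gcd condition. -/
lemma stmt_4_gcd_shift (a b k : ℤ) (h : Int.gcd a b = 1) :
    Int.gcd (a + b * k) b = 1 := by
  rw [← Int.isCoprime_iff_gcd_eq_one] at h ⊢
  exact h.add_mul_left_left k

/-- General division with even quotient: for coprime `a`, `b` of opposite
parity with `b ≠ 0`, one has `a = m·b + r` with `m` even, `|r| < |b|`, `r` of
the same parity as `a`, and `gcd(r, b) = 1`. -/
theorem stmt_4 (a b : ℤ) (hb : b ≠ 0) (hco : Int.gcd a b = 1)
    (hpar : (Even a ∧ Odd b) ∨ (Odd a ∧ Even b)) :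
    ∃ m r : ℤ, Even m ∧ a = m * b + r ∧ |r| < |b| ∧ (Even r ↔ Even a) ∧
      Int.gcd r b = 1 := by
  have habs : 0 < |b| := abs_pos.mpr hb
  set c : ℤ := 2 * |b| with hc
  have hcpos : 0 < c := by positivity
  set q : ℤ := a / c with hq
  set r0 : ℤ := a % c with hr0def
  have hdiv : a = c * q + r0 := (Int.mul_ediv_add_emod a c).symm
  have hr0 : 0 ≤ r0 := Int.emod_nonneg _ (ne_of_gt hcpos)
  have hr0c : r0 < c := Int.emod_lt_of_pos _ hcpos
  have hsb : b.sign * b = |b| := by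
    rcases lt_or_gt_of_ne hb with h | h
    · simp [Int.sign_eq_neg_one_of_neg h, abs_of_neg h]
    · simp [Int.sign_eq_one_of_pos h, abs_of_pos h]
  have hcq : Even (c * q) := ⟨|b| * q, by rw [hc]; ring⟩
  by_cases hcase : r0 < |b|
  · refine ⟨2 * q * b.sign, r0, ⟨q * b.sign, by ring⟩, ?_, ?_, ?_, ?_⟩
    · rw [hdiv, hc]; linear_combination (-2 * q) * hsb
    · rw [abs_of_nonneg hr0]; exact hcase
    · rw [hdiv, Int.even_add]; tauto
    · have h1 : r0 = a + b * (-(2 * q * b.sign)) := by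
        rw [hdiv, hc]; linear_combination (2 * q) * hsb
      rw [h1]; exact stmt_4_gcd_shift a b _ hco
  · push_neg at hcase
    set r : ℤ := r0 - c with hrdef
    have hr_eq : a = (2 * q + 2) * b.sign * b + r := by
      rw [hdiv, hrdef, hc]; linear_combination (-(2 * q + 2)) * hsb
    have hgcd : Int.gcd r b = 1 := by
      have h1 : r = a + b * (-((2 * q + 2) * b.sign)) := by rw [hr_eq]; ring
      rw [h1]; exact stmt_4_gcd_shift a b _ hco
    have hmb : Even ((2 * q + 2) * b.sign * b) := ⟨(q + 1) * b.sign * b, by ring⟩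
    have hparity : Even r ↔ Even a := by
      rw [hr_eq, Int.even_add]; tauto
    have hrne : r ≠ -|b| := by
      intro hcontra
      have hgb : Int.gcd r b = b.natAbs := by
        rw [hcontra]
        simp [Int.gcd, Int.natAbs_neg, Int.natAbs_abs, Nat.gcd_self]
      have hb1 : b.natAbs = 1 := by rw [← hgb, hgcd]
      have habs1 : |b| = 1 := by rw [Int.abs_eq_natAbs, hb1]; rfl
      rcases hpar with ⟨hA, _⟩ | ⟨_, hB⟩
      · rcases hparity.mpr hA with ⟨k, hk⟩
        omega
      · rcases hB with ⟨k, hk⟩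
        omega
    have habsr : |r| < |b| := by
      have hrneg : r < 0 := by omega
      rw [abs_of_neg hrneg]
      have h1 : -|b| ≤ r := by omega
      rcases lt_or_eq_of_le h1 with h | h
      · omega
      · exact absurd h.symm hrne
    exact ⟨(2 * q + 2) * b.sign, r, ⟨(q + 1) * b.sign, by ring⟩, hr_eq, habsr, hparity, hgcd⟩
end
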